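/- If ρ satisfies (C1)-(C4), subadditivity (P1) and sensitivity (P2) ([X ≤ 0 and ρ_t(X) ≥ 0] implies X = 0), then the reverse sensitivity holds: for all X ∈ X and t, if X ≥ 0 and ρ_t(X) ≤ 0 then X = 0 almost surely. -/

import Mathlib

open MeasureTheory

/-- If a DMU `ρ` satisfies (C1)–(C4), subadditivity (P1) and sensitivity (P2),
then the reverse sensitivity holds: if `X ≥ 0` and `ρ_t X ≤ 0` then
`X = 0` almost surely. -/
theorem dmu_reverse_sensitivity
    {Ω : Type*} {m : MeasurableSpace Ω} (μ : Measure Ω) [IsProbabilityMeasure μ]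
    (F : MeasureTheory.Filtration ℕ m) (T : ℕ)
    (ρ : ℕ → (Ω → ℝ) → (Ω → ℝ))
    (hmono : ∀ t, t ≤ T → ∀ (X Y : Ω → ℝ), X ≤ Y → ρ t X ≤ ρ t Y)
    (hreg : ∀ t, t ≤ T → ∀ (X : Ω → ℝ) (A : Set Ω), MeasurableSet[F t] A →
      ρ t (A.indicator X) = A.indicator (ρ t X))
    (hrec : ∀ t, t < T → ∀ (X : Ω → ℝ), ρ t (ρ (t + 1) X) = ρ t X)
    (hcti : ∀ t, t ≤ T → ∀ (X Y : Ω → ℝ), Measurable[F t] Y →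
      ρ t (X + Y) = ρ t X + Y)
    (hsub : ∀ t, t ≤ T → ∀ (X Y : Ω → ℝ), ρ t (X + Y) ≤ ρ t X + ρ t Y)
    (hsens : ∀ t, t ≤ T → ∀ X : Ω → ℝ,
      (∀ᵐ ω ∂μ, X ω ≤ 0) → (∀ᵐ ω ∂μ, 0 ≤ ρ t X ω) → X =ᵐ[μ] 0) :
    ∀ t, t ≤ T → ∀ X : Ω → ℝ,
      (∀ᵐ ω ∂μ, 0 ≤ X ω) → (∀ᵐ ω ∂μ, ρ t X ω ≤ 0) → X =ᵐ[μ] 0 := by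
  intro t ht X hX hρ
  have h0 : ρ t 0 = 0 := by
    have := hreg t ht 0 ∅ (@MeasurableSet.empty Ω (F t))
    simp at this; exact this
  have hsub' := hsub t ht X (-X)
  rw [show X + -X = (0 : Ω → ℝ) by funext ω; simp, h0] at hsub'
  have hneg : (-X) =ᵐ[μ] 0 := by
    apply hsens t ht (-X)
    · filter_upwards [hX] with ω h; simpa using h
    · filter_upwards [hρ] with ω h
      have h2 := hsub' ω
      simp only [Pi.add_apply, Pi.zero_apply] at h2
      linarith
  filter_upwards [hneg] with ω h
  simpa using congrArg Neg.neg h
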